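/- For a prime p ≡ 3 (mod 4), the quantity B₂(χ) = (1/p) ∑_{μ=1}^{p-1} μ² (μ|p) is an odd integer. -/

import Mathlib

private lemma leg_congr (p : ℕ) [Fact p.Prime] {a b : ℤ} (h : (a : ZMod p) = (b : ZMod p)) :
    legendreSym p a = legendreSym p b := by
  unfold legendreSym
  rw [h]

theorem B2chi_odd_of_three_mod_four (p : ℕ) [Fact p.Prime] (h4 : p % 4 = 3) :
    ∃ B : ℤ, (p : ℤ) * B = ∑ μ ∈ Finset.Icc 1 (p - 1), (μ : ℤ) ^ 2 * legendreSym p μ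
      ∧ Odd B := by
  have hp := Fact.out (p := p.Prime)
  have hp2 : p ≠ 2 := by omega
  have hp3 : 3 ≤ p := by
    rcases hp.two_le.lt_or_eq with h | h
    · omega
    · omega
  -- χ(-a) = -χ(a)
  have hneg : ∀ a : ℤ, legendreSym p (-a) = - legendreSym p a := by
    intro a
    have h1 : (-a) = -1 * a := by ring
    rw [h1, legendreSym.mul, legendreSym.at_neg_one hp2, ZMod.χ₄_nat_three_mod_four h4]
    ring
  set S := ∑ μ ∈ Finset.Icc 1 (p - 1), (μ : ℤ) ^ 2 * legendreSym p μ with hS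
  set T := ∑ μ ∈ Finset.Icc 1 (p - 1), (μ : ℤ) * legendreSym p μ with hT
  set C := ∑ μ ∈ Finset.Icc 1 (p - 1), (legendreSym p μ : ℤ) with hC
  have hne : ∀ μ ∈ Finset.Icc 1 (p - 1), ((μ : ℤ) : ZMod p) ≠ 0 := by
    intro μ hμ
    simp only [Finset.mem_Icc] at hμ
    push_cast
    rw [Ne, ZMod.natCast_eq_zero_iff]
    intro hdvd
    have := Nat.le_of_dvd (by omega) hdvd
    omega
  -- C = 0
  have hC0 : C = 0 := by
    have h1 : C = ∑ x ∈ Finset.univ.erase (0 : ZMod p), quadraticChar (ZMod p) x := by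
      rw [hC]
      refine Finset.sum_nbij' (fun μ => (μ : ZMod p)) (fun x => x.val) ?_ ?_ ?_ ?_ ?_
      · intro a ha
        simp only [Finset.mem_erase, Finset.mem_univ, and_true]
        have := hne a ha
        push_cast at this
        exact this
      · intro x hx
        simp only [Finset.mem_erase, Finset.mem_univ, and_true] at hx
        simp only [Finset.mem_Icc]
        have h2 := ZMod.val_pos.mpr hx
        have h3 := ZMod.val_lt x
        omega
      · intro a ha
        simp only [Finset.mem_Icc] at ha
        exact ZMod.val_cast_of_lt (by omega)
      · intro x hx
        simp [ZMod.natCast_val, ZMod.cast_id]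
      · intro a ha
        unfold legendreSym
        push_cast
        rfl
    rw [h1]
    have h2 : ∑ x : ZMod p, quadraticChar (ZMod p) x = 0 := by
      apply quadraticChar_sum_zero
      rw [ZMod.ringChar_zmod_n]
      exact hp2
    rw [← Finset.add_sum_erase _ _ (Finset.mem_univ (0 : ZMod p))] at h2
    simpa using h2
  -- reflection
  have hrefl : S = ∑ μ ∈ Finset.Icc 1 (p - 1), ((p : ℤ) - μ) ^ 2 * (-(legendreSym p μ)) := by
    rw [hS]
    refine Finset.sum_nbij' (fun μ => p - μ) (fun μ => p - μ) ?_ ?_ ?_ ?_ ?_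
    · intro a ha
      simp only [Finset.mem_Icc] at *
      omega
    · intro a ha
      simp only [Finset.mem_Icc] at *
      omega
    · intro a ha
      simp only [Finset.mem_Icc] at ha
      show p - (p - a) = a
      omega
    · intro a ha
      simp only [Finset.mem_Icc] at ha
      show p - (p - a) = a
      omega
    · intro a ha
      simp only [Finset.mem_Icc] at ha
      have hcast : (((p - a : ℕ) : ℤ)) = (p : ℤ) - a := by
        push_cast [Nat.cast_sub (by omega : a ≤ p)]
        ring
      have hleg : legendreSym p ((p - a : ℕ) : ℤ) = -(legendreSym p a) := by
        have h1 : legendreSym p ((p - a : ℕ) : ℤ) = legendreSym p (-(a : ℤ)) := by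
          apply leg_congr
          rw [hcast]
          push_cast
          simp
        rw [h1, hneg]
      rw [hleg, hcast]
      ring
  have key : S + S = 2 * p * T - (p : ℤ) ^ 2 * C := by
    nth_rewrite 1 [hrefl]
    rw [hT, hC, Finset.mul_sum, Finset.mul_sum, ← Finset.sum_sub_distrib,
      ← Finset.sum_add_distrib]
    apply Finset.sum_congr rfl
    intro μ hμ
    ring
  have hSpT : S = (p : ℤ) * T := by
    rw [hC0] at key
    linarith
  -- parity of T
  have hsum_range : ∑ μ ∈ Finset.range p, (μ : ℤ) = ∑ μ ∈ Finset.Icc 1 (p - 1), (μ : ℤ) := by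
    symm
    apply Finset.sum_subset
    · intro x hx
      simp only [Finset.mem_Icc, Finset.mem_range] at *
      omega
    · intro x hx hx'
      simp only [Finset.mem_Icc, Finset.mem_range] at *
      have : x = 0 := by omega
      simp [this]
  have hgauss : (∑ μ ∈ Finset.Icc 1 (p - 1), (μ : ℤ)) * 2 = (p : ℤ) * (p - 1) := by
    rw [← hsum_range]
    have := Finset.sum_range_id_mul_two p
    have hcast : ((∑ i ∈ Finset.range p, i : ℕ) : ℤ) * 2 = ((p * (p - 1) : ℕ) : ℤ) := by
      exact_mod_cast congrArg (Nat.cast : ℕ → ℤ) this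
    push_cast [Nat.cast_sub (by omega : 1 ≤ p)] at hcast
    convert hcast using 2
  obtain ⟨q, hq⟩ : ∃ q, p = 4 * q + 3 := ⟨p / 4, by omega⟩
  have hodd_sum : Odd (∑ μ ∈ Finset.Icc 1 (p - 1), (μ : ℤ)) := by
    have h1 : (∑ μ ∈ Finset.Icc 1 (p - 1), (μ : ℤ)) = (4 * q + 3) * (2 * q + 1) := by
      have h2 : (p : ℤ) * (p - 1) = ((4 * q + 3) * (2 * q + 1)) * 2 := by
        rw [hq]; push_cast; ring
      rw [h2] at hgauss
      exact mul_right_cancel₀ (by norm_num) hgauss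
    rw [h1]
    exact Odd.mul ⟨2 * q + 1, by ring⟩ ⟨q, by ring⟩
  have heven : Even (T - ∑ μ ∈ Finset.Icc 1 (p - 1), (μ : ℤ)) := by
    rw [hT, ← Finset.sum_sub_distrib]
    rw [even_iff_two_dvd]
    apply Finset.dvd_sum
    intro μ hμ
    rcases legendreSym.eq_one_or_neg_one p (hne μ hμ) with h | h
    · rw [h]; simp
    · rw [h]
      exact ⟨-μ, by ring⟩
  have hoddT : Odd T := by
    have := heven.add_odd hodd_sum
    simpa using this
  exact ⟨T, hSpT.symm, hoddT⟩
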